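/- A linear Hermiticity-preserving map Λ : M_N(ℂ) → M_N(ℂ) is k-positive if and only if (1 ⊗ Λ)(|Ψ_k⟩⟨Ψ_k|) is positive semidefinite for every maximally entangled Schmidt-rank-k vector Ψ_k, i.e. every vector of the form Ψ_k = (1/√k) Σ_{i=1}^k a_i ⊗ b_i with {a_1,…,a_k} and {b_1,…,b_k} orthonormal families in ℂ^N. -/

import Mathlib

open Matrix BigOperators
open scoped ComplexOrder

/-- The `n × n` matrix `M_ψ` associated to a vector `ψ ∈ ℂ^α ⊗ ℂ^β`,
with entries `(M_ψ)_{ij} = ⟨e_i ⊗ e_j, ψ⟩ = ψ (i, j)`. -/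
def matOfVec {α β : Type*} (ψ : α × β → ℂ) : Matrix α β ℂ :=
  Matrix.of fun i j => ψ (i, j)

/-- The Schmidt rank of a bipartite vector is the rank of its associated matrix. -/
noncomputable def schmidtRank {α β : Type*} [Fintype β] (ψ : α × β → ℂ) : ℕ :=
  (matOfVec ψ).rank

/-- `ψ` is a unit vector. -/
def IsUnitVec {γ : Type*} [Fintype γ] (ψ : γ → ℂ) : Prop :=
  ∑ x, Complex.normSq (ψ x) = 1

/-- The outer product `|ψ⟩⟨ψ|`. -/
def outer {γ : Type*} (ψ : γ → ℂ) : Matrix γ γ ℂ :=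
  Matrix.of fun x y => ψ x * star (ψ y)

/-- `ρ ∈ S_k`: `ρ` admits a decomposition `ρ = ∑ i, p i • |ψ i⟩⟨ψ i|` with `p i ≥ 0`,
`∑ i, p i = 1`, each `ψ i` a unit vector of Schmidt rank at most `k`. -/
def InSchmidtClass {α : Type*} [Fintype α] (k : ℕ)
    (ρ : Matrix (α × α) (α × α) ℂ) : Prop :=
  ∃ (m : ℕ) (p : Fin m → ℝ) (ψ : Fin m → α × α → ℂ),
    (∀ i, 0 ≤ p i) ∧ (∑ i, p i) = 1 ∧
    (∀ i, IsUnitVec (ψ i)) ∧ (∀ i, schmidtRank (ψ i) ≤ k) ∧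
    ρ = ∑ i, (p i : ℂ) • outer (ψ i)

/-- The map `1 ⊗ Λ`, applying `Λ` to each block of a matrix indexed by `γ × Fin n`. -/
def blockMap {γ : Type*} {n m : ℕ}
    (Λ : Matrix (Fin n) (Fin n) ℂ → Matrix (Fin m) (Fin m) ℂ)
    (X : Matrix (γ × Fin n) (γ × Fin n) ℂ) : Matrix (γ × Fin m) (γ × Fin m) ℂ :=
  Matrix.of fun a b => Λ (Matrix.of fun s t => X (a.1, s) (b.1, t)) a.2 b.2

/-- `Λ` is Hermiticity-preserving: `Λ(X†) = Λ(X)†`. -/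
def HermPreserving {n m : ℕ}
    (Λ : Matrix (Fin n) (Fin n) ℂ → Matrix (Fin m) (Fin m) ℂ) : Prop :=
  ∀ X, Λ Xᴴ = (Λ X)ᴴ

/-- `Λ` is `k`-positive: `(1 ⊗ Λ)(|ψ⟩⟨ψ|)` is positive semidefinite for every
unit vector `ψ ∈ ℂ^N ⊗ ℂ^N` of Schmidt rank at most `k`. -/
def kPositive {N : ℕ} (k : ℕ)
    (Λ : Matrix (Fin N) (Fin N) ℂ → Matrix (Fin N) (Fin N) ℂ) : Prop :=
  ∀ ψ : Fin N × Fin N → ℂ, IsUnitVec ψ → schmidtRank ψ ≤ k →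
    (blockMap Λ (outer ψ)).PosSemidef

/-- The maximally entangled Schmidt-rank-`k` vector `(1/√k) ∑ i, a i ⊗ b i`. -/
noncomputable def maxEntVec {N k : ℕ} (a b : Fin k → Fin N → ℂ) : Fin N × Fin N → ℂ :=
  fun x => ((Real.sqrt k : ℂ))⁻¹ * ∑ i, a i x.1 * b i x.2

/-- `v` is an orthonormal family. -/
def OrthonormalFam {N k : ℕ} (v : Fin k → Fin N → ℂ) : Prop :=
  ∀ i j, star (v i) ⬝ᵥ v j = if i = j then (1 : ℂ) else 0

noncomputable def ampMat {N : ℕ} (A : Matrix (Fin N) (Fin N) ℂ) :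
    Matrix (Fin N × Fin N) (Fin N × Fin N) ℂ :=
  Matrix.of fun p q => if p.2 = q.2 then A p.1 q.1 else 0

noncomputable def ampVec {N : ℕ} (A : Matrix (Fin N) (Fin N) ℂ) (Φ : Fin N × Fin N → ℂ) :
    Fin N × Fin N → ℂ :=
  fun p => ∑ x', A p.1 x' * Φ (x', p.2)

lemma outer_ampVec {N : ℕ} (A : Matrix (Fin N) (Fin N) ℂ) (Φ : Fin N × Fin N → ℂ) :
    outer (ampVec A Φ) = ampMat A * outer Φ * (ampMat A)ᴴ := by
  ext ⟨x, s⟩ ⟨y, t⟩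
  simp only [outer, ampVec, ampMat, Matrix.mul_apply, Matrix.conjTranspose_apply,
    Matrix.of_apply, Fintype.sum_prod_type, apply_ite (star : ℂ → ℂ), star_zero,
    star_sum, star_mul', ite_mul, zero_mul, mul_ite, mul_zero,
    Finset.sum_ite_eq, Finset.sum_ite_eq', Finset.mem_univ, if_true]
  rw [Finset.sum_mul_sum]
  rw [Finset.sum_comm]
  refine Finset.sum_congr rfl fun y' _ => ?_
  rw [Finset.sum_mul]
  refine Finset.sum_congr rfl fun x' _ => ?_
  ring

lemma blockMap_amp {N : ℕ} (Λ : Matrix (Fin N) (Fin N) ℂ →ₗ[ℂ] Matrix (Fin N) (Fin N) ℂ)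
    (A : Matrix (Fin N) (Fin N) ℂ) (X : Matrix (Fin N × Fin N) (Fin N × Fin N) ℂ) :
    blockMap (⇑Λ) (ampMat A * X * (ampMat A)ᴴ) =
      ampMat A * blockMap (⇑Λ) X * (ampMat A)ᴴ := by
  ext ⟨x, s⟩ ⟨y, t⟩
  have hblock : (Matrix.of fun s' t' => (ampMat A * X * (ampMat A)ᴴ) (x, s') (y, t'))
      = ∑ x' : Fin N, ∑ y' : Fin N, (A x x' * star (A y y')) •
          (Matrix.of fun s' t' => X (x', s') (y', t')) := by
    ext s' t'
    simp only [Matrix.of_apply, Matrix.sum_apply, Matrix.smul_apply, smul_eq_mul,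
      ampMat, Matrix.mul_apply, Matrix.conjTranspose_apply, Fintype.sum_prod_type,
      apply_ite (star : ℂ → ℂ), star_zero, ite_mul, zero_mul, mul_ite, mul_zero,
      Finset.sum_ite_eq, Finset.sum_ite_eq', Finset.mem_univ, if_true]
    rw [Finset.sum_comm]
    refine Finset.sum_congr rfl fun y' _ => ?_
    rw [Finset.sum_mul]
    refine Finset.sum_congr rfl fun x' _ => ?_
    ring
  show Λ _ s t = _
  rw [hblock]
  rw [map_sum]
  simp only [map_sum, _root_.map_smul, Matrix.sum_apply, Matrix.smul_apply, smul_eq_mul]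
  simp only [blockMap, Matrix.mul_apply, Matrix.conjTranspose_apply, Matrix.of_apply,
    ampMat, Fintype.sum_prod_type,
    apply_ite (star : ℂ → ℂ), star_zero, ite_mul, zero_mul, mul_ite, mul_zero,
    Finset.sum_ite_eq, Finset.sum_ite_eq', Finset.mem_univ, if_true]
  rw [Finset.sum_comm]
  refine Finset.sum_congr rfl fun y' _ => ?_
  rw [Finset.sum_mul]
  refine Finset.sum_congr rfl fun x' _ => ?_
  ring

lemma key_sum {N k : ℕ} (a b : Fin k → Fin N → ℂ)
    (ha : OrthonormalFam a) (hb : OrthonormalFam b) :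
    ∑ x : Fin N, ∑ y : Fin N,
      (∑ i, a i x * b i y) * star (∑ j, a j x * b j y) = (k : ℂ) := by
  have step1 : ∀ x y : Fin N, (∑ i, a i x * b i y) * star (∑ j, a j x * b j y)
      = ∑ i, ∑ j, (a i x * star (a j x)) * (b i y * star (b j y)) := by
    intro x y
    rw [star_sum, Finset.sum_mul_sum]
    refine Finset.sum_congr rfl fun i _ => Finset.sum_congr rfl fun j _ => ?_
    rw [star_mul']
    ring
  simp only [step1]
  calc ∑ x : Fin N, ∑ y : Fin N, ∑ i : Fin k, ∑ j : Fin k,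
        (a i x * star (a j x)) * (b i y * star (b j y))
      = ∑ x : Fin N, ∑ i : Fin k, ∑ y : Fin N, ∑ j : Fin k,
        (a i x * star (a j x)) * (b i y * star (b j y)) :=
        Finset.sum_congr rfl fun x _ => Finset.sum_comm
    _ = ∑ i : Fin k, ∑ x : Fin N, ∑ y : Fin N, ∑ j : Fin k,
        (a i x * star (a j x)) * (b i y * star (b j y)) := Finset.sum_comm
    _ = ∑ i : Fin k, ∑ x : Fin N, ∑ j : Fin k, ∑ y : Fin N,
        (a i x * star (a j x)) * (b i y * star (b j y)) :=
        Finset.sum_congr rfl fun i _ => Finset.sum_congr rfl fun x _ => Finset.sum_comm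
    _ = ∑ i : Fin k, ∑ j : Fin k, ∑ x : Fin N, ∑ y : Fin N,
        (a i x * star (a j x)) * (b i y * star (b j y)) :=
        Finset.sum_congr rfl fun i _ => Finset.sum_comm
    _ = ∑ i : Fin k, ∑ j : Fin k,
        (∑ x : Fin N, a i x * star (a j x)) * (∑ y : Fin N, b i y * star (b j y)) := by
        refine Finset.sum_congr rfl fun i _ => Finset.sum_congr rfl fun j _ => ?_
        rw [Finset.sum_mul_sum]
    _ = (k : ℂ) := by
        have hdot : ∀ (v : Fin k → Fin N → ℂ), OrthonormalFam v → ∀ i j : Fin k,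
            (∑ x : Fin N, v i x * star (v j x)) = if j = i then (1:ℂ) else 0 := by
          intro v hv i j
          rw [← hv j i]
          simp only [dotProduct, Pi.star_apply]
          exact Finset.sum_congr rfl fun x _ => mul_comm _ _
        simp only [hdot a ha, hdot b hb, ite_mul, one_mul, zero_mul, mul_ite, mul_zero]
        have hone : ∀ x : Fin k, (∑ x1 : Fin k,
            if x1 = x then (if x1 = x then (1:ℂ) else 0) else 0) = 1 := by
          intro x
          rw [Finset.sum_ite_eq' Finset.univ x]
          simp
        simp [hone]

lemma isUnitVec_maxEntVec {N k : ℕ} (hk : 1 ≤ k) (a b : Fin k → Fin N → ℂ)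
    (ha : OrthonormalFam a) (hb : OrthonormalFam b) :
    IsUnitVec (maxEntVec a b) := by
  have hk0 : (k : ℂ) ≠ 0 := Nat.cast_ne_zero.mpr (by omega)
  have hs : (((Real.sqrt k : ℂ))⁻¹ * star ((Real.sqrt k : ℂ))⁻¹) = (k : ℂ)⁻¹ := by
    rw [star_inv₀, Complex.star_def, Complex.conj_ofReal, ← mul_inv,
      ← Complex.ofReal_mul, Real.mul_self_sqrt (Nat.cast_nonneg k), Complex.ofReal_natCast]
  have hsum : ∑ p : Fin N × Fin N, maxEntVec a b p * star (maxEntVec a b p) = 1 := by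
    have : ∀ p : Fin N × Fin N, maxEntVec a b p * star (maxEntVec a b p)
        = (k : ℂ)⁻¹ * ((∑ i, a i p.1 * b i p.2) * star (∑ j, a j p.1 * b j p.2)) := by
      intro p
      simp only [maxEntVec, star_mul']
      rw [← hs]; ring
    simp only [this]
    rw [← Finset.mul_sum, Fintype.sum_prod_type, key_sum a b ha hb,
      inv_mul_cancel₀ hk0]
  unfold IsUnitVec
  have : ∀ p : Fin N × Fin N, maxEntVec a b p * star (maxEntVec a b p)
      = ((Complex.normSq (maxEntVec a b p) : ℝ) : ℂ) := fun p => Complex.mul_conj _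
  rw [Finset.sum_congr rfl (fun p _ => this p)] at hsum
  rw [← Complex.ofReal_sum] at hsum
  exact_mod_cast hsum

lemma schmidtRank_maxEntVec_le {N k : ℕ} (a b : Fin k → Fin N → ℂ) :
    schmidtRank (maxEntVec a b) ≤ k := by
  unfold schmidtRank Matrix.rank
  have hle : LinearMap.range (matOfVec (maxEntVec a b)).mulVecLin ≤
      Submodule.span ℂ (Set.range a) := by
    rintro _ ⟨v, rfl⟩
    have hrepr : (matOfVec (maxEntVec a b)).mulVecLin v
        = ∑ i, (((Real.sqrt k : ℂ))⁻¹ * ∑ y, b i y * v y) • a i := by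
      funext x
      simp only [Matrix.mulVecLin_apply, Matrix.mulVec, dotProduct, matOfVec,
        Matrix.of_apply, maxEntVec, Finset.sum_apply, Pi.smul_apply, smul_eq_mul]
      simp only [Finset.mul_sum, Finset.sum_mul]
      rw [Finset.sum_comm]
      refine Finset.sum_congr rfl fun i _ => Finset.sum_congr rfl fun y _ => ?_
      ring
    rw [hrepr]
    exact Submodule.sum_mem _ fun i _ =>
      Submodule.smul_mem _ _ (Submodule.subset_span ⟨i, rfl⟩)
  refine (Submodule.finrank_mono hle).trans ?_
  refine (finrank_span_le_card _).trans ?_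
  rw [Set.toFinset_range]
  exact Finset.card_image_le.trans (by simp)

lemma exists_orthonormal_completion {N k : ℕ} (hkN : k ≤ N)
    (M : Matrix (Fin N) (Fin N) ℂ) (hrk : M.rank ≤ k) :
    ∃ c : Fin k → Fin N → ℂ, OrthonormalFam c ∧
      ∀ x y : Fin N, ∑ i, (∑ t, star (c i t) * M x t) * c i y = M x y := by
  classical
  let rows : Fin N → EuclideanSpace ℂ (Fin N) := fun x => WithLp.toLp 2 (M x)
  let W : Submodule ℂ (EuclideanSpace ℂ (Fin N)) := Submodule.span ℂ (Set.range rows)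
  have hW : Module.finrank ℂ W ≤ k := by
    have h2 := Matrix.rank_eq_finrank_span_cols Mᵀ
    rw [Matrix.rank_transpose] at h2
    have h3 : W = (Submodule.span ℂ (Set.range Mᵀ.col)).map
        (WithLp.linearEquiv 2 ℂ (Fin N → ℂ)).symm.toLinearMap := by
      rw [Submodule.map_span, ← Set.range_comp]; rfl
    rw [h3, LinearEquiv.finrank_map_eq, ← h2]; exact hrk
  set r := Module.finrank ℂ W with hr
  have hrN : r ≤ N := hW.trans hkN
  let w : OrthonormalBasis (Fin r) ℂ W := stdOrthonormalBasis ℂ W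
  let v : Fin N → EuclideanSpace ℂ (Fin N) :=
    fun i => if h : (i : ℕ) < r then (w ⟨i, h⟩ : EuclideanSpace ℂ (Fin N)) else 0
  let s : Set (Fin N) := {i | (i : ℕ) < r}
  have hon : Orthonormal ℂ (s.restrict v) := by
    rw [orthonormal_iff_ite]
    rintro ⟨i, hi⟩ ⟨j, hj⟩
    have hi' : (i : ℕ) < r := hi
    have hj' : (j : ℕ) < r := hj
    change inner ℂ (v i) (v j) = _
    simp only [Set.restrict_apply, v, dif_pos hi', dif_pos hj']
    rw [← Submodule.coe_inner, orthonormal_iff_ite.mp w.orthonormal]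
    simp [Fin.mk.injEq, Subtype.mk.injEq, Fin.val_eq_val]
  obtain ⟨bb, hbb⟩ := hon.exists_orthonormalBasis_extension_of_card_eq
    (by rw [finrank_euclideanSpace, Fintype.card_fin])
  let cV : Fin k → EuclideanSpace ℂ (Fin N) := fun i => bb (Fin.castLE hkN i)
  have honc : ∀ i j : Fin k, (inner ℂ (cV i) (cV j) : ℂ) = if i = j then 1 else 0 := by
    intro i j
    rw [orthonormal_iff_ite.mp bb.orthonormal]
    simp [cV, Fin.castLE_inj]
  refine ⟨fun i => cV i, ?_, ?_⟩
  · intro i j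
    rw [← honc i j]
    simp only [dotProduct, PiLp.inner_apply, RCLike.inner_apply, Pi.star_apply]
    exact Finset.sum_congr rfl fun _ _ => mul_comm _ _
  · intro x y
    have huW : rows x ∈ W := Submodule.subset_span ⟨x, rfl⟩
    have hspan : rows x ∈ Submodule.span ℂ (Set.range cV) := by
      have hexp := w.sum_repr ⟨rows x, huW⟩
      have hexp' : rows x = ∑ t : Fin r,
          w.repr ⟨rows x, huW⟩ t • ((w t : EuclideanSpace ℂ (Fin N))) := by
        have := congrArg (W.subtype) hexp
        simpa using this.symm
      rw [hexp']
      refine Submodule.sum_mem _ fun t _ => Submodule.smul_mem _ _ ?_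
      have h1 : ((w t : EuclideanSpace ℂ (Fin N)))
          = bb (Fin.castLE hkN ⟨(t : ℕ), t.isLt.trans_le hW⟩) := by
        have h2 : (Fin.castLE hkN ⟨(t : ℕ), t.isLt.trans_le hW⟩ : Fin N)
            = ⟨(t : ℕ), t.isLt.trans_le hrN⟩ := rfl
        rw [h2, hbb ⟨(t : ℕ), t.isLt.trans_le hrN⟩ t.isLt]
        simp only [v, dif_pos t.isLt]
      rw [h1]
      exact Submodule.subset_span ⟨_, rfl⟩
    have hzero : ∀ z ∈ Submodule.span ℂ (Set.range cV), ∀ j : Fin N,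
        ¬ ((j : ℕ) < k) → (inner ℂ (bb j) z : ℂ) = 0 := by
      intro z hz
      induction hz using Submodule.span_induction with
      | mem z hz =>
        obtain ⟨i, rfl⟩ := hz
        intro j hj
        rw [orthonormal_iff_ite.mp bb.orthonormal]
        have hne : j ≠ Fin.castLE hkN i := by
          intro h
          exact hj (by simpa [h] using i.isLt)
        rw [if_neg hne]
      | zero => intro j _; simp
      | add z₁ z₂ _ _ h1 h2 =>
        intro j hj
        rw [inner_add_right, h1 j hj, h2 j hj, add_zero]
      | smul c z _ h1 =>
        intro j hj
        rw [inner_smul_right, h1 j hj, mul_zero]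
    have hrep := bb.sum_repr' (rows x)
    have himg : ∑ j : Fin N, (inner ℂ (bb j) (rows x) : ℂ) • bb j
        = ∑ i : Fin k, (inner ℂ (cV i) (rows x) : ℂ) • cV i := by
      have h1 : ∑ i : Fin k, (inner ℂ (bb (Fin.castLE hkN i)) (rows x) : ℂ)
            • bb (Fin.castLE hkN i)
          = ∑ j ∈ Finset.univ.image (Fin.castLE hkN),
              (inner ℂ (bb j) (rows x) : ℂ) • bb j :=
        (Finset.sum_image (f := fun j => (inner ℂ (bb j) (rows x) : ℂ) • bb j)
          (fun p _ q _ h => Fin.castLE_injective hkN h)).symm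
      have h2 : ∑ j ∈ Finset.univ.image (Fin.castLE hkN),
          (inner ℂ (bb j) (rows x) : ℂ) • bb j
          = ∑ j : Fin N, (inner ℂ (bb j) (rows x) : ℂ) • bb j := by
        refine Finset.sum_subset (Finset.subset_univ _) fun j _ hj => ?_
        have hjk : ¬ ((j : ℕ) < k) := by
          intro hlt
          exact hj (Finset.mem_image.mpr ⟨⟨(j : ℕ), hlt⟩, Finset.mem_univ _, rfl⟩)
        rw [hzero _ hspan j hjk, zero_smul]
      exact h2.symm.trans h1.symm
    rw [himg] at hrep
    have e1 := congrArg (fun z => (EuclideanSpace.proj (𝕜 := ℂ) y) z) hrep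
    simp only [map_sum, _root_.map_smul, smul_eq_mul] at e1
    have hproj : ∀ z : EuclideanSpace ℂ (Fin N),
        (EuclideanSpace.proj (𝕜 := ℂ) y) z = z y := fun z => rfl
    simp only [hproj] at e1
    have hinner : ∀ i : Fin k, (inner ℂ (cV i) (rows x) : ℂ)
        = ∑ t, star (cV i t) * M x t := by
      intro i
      simp only [PiLp.inner_apply, RCLike.inner_apply]
      exact Finset.sum_congr rfl fun _ _ => mul_comm _ _
    rw [Finset.sum_congr rfl fun i _ => by rw [hinner i]] at e1
    exact e1

/-- A Hermiticity-preserving linear map `Λ` is `k`-positive iff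
`(1 ⊗ Λ)(|Ψ_k⟩⟨Ψ_k|)` is positive semidefinite for every maximally entangled
Schmidt-rank-`k` vector `Ψ_k = (1/√k) ∑ i, a i ⊗ b i` with `a`, `b` orthonormal families. -/
theorem kPositive_iff_maxEnt {N k : ℕ} (hk : 1 ≤ k) (hkN : k ≤ N)
    (Λ : Matrix (Fin N) (Fin N) ℂ →ₗ[ℂ] Matrix (Fin N) (Fin N) ℂ)
    (hherm : HermPreserving (⇑Λ)) :
    kPositive k (⇑Λ) ↔
      ∀ a b : Fin k → Fin N → ℂ, OrthonormalFam a → OrthonormalFam b →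
        (blockMap (⇑Λ) (outer (maxEntVec a b))).PosSemidef := by
  constructor
  · intro h a b ha hb
    exact h _ (isUnitVec_maxEntVec hk a b ha hb) (schmidtRank_maxEntVec_le a b)
  · intro h ψ hunit hrank
    classical
    set M : Matrix (Fin N) (Fin N) ℂ := matOfVec ψ with hM
    obtain ⟨c, hc, hproj⟩ := exists_orthonormal_completion hkN M hrank
    set e : Fin k → Fin N → ℂ :=
      fun i x' => if x' = Fin.castLE hkN i then 1 else 0 with he_def
    have he : OrthonormalFam e := by
      intro i j
      simp only [dotProduct, Pi.star_apply, he_def, apply_ite (star : ℂ → ℂ),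
        star_one, star_zero, ite_mul, zero_mul, one_mul]
      rw [Finset.sum_ite_eq' Finset.univ (Fin.castLE hkN i)
        (fun x => if x = Fin.castLE hkN j then (1:ℂ) else 0)]
      simp [Fin.castLE_inj, eq_comm]
    set A : Matrix (Fin N) (Fin N) ℂ := Matrix.of fun x x' =>
      if h : (x' : ℕ) < k then
        (Real.sqrt k : ℂ) * ∑ t, star (c ⟨(x' : ℕ), h⟩ t) * M x t
      else 0 with hA
    have hsqrt : ((Real.sqrt k : ℝ) : ℂ) ≠ 0 := by
      have : (0 : ℝ) < Real.sqrt k := Real.sqrt_pos.mpr (by exact_mod_cast hk)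
      exact_mod_cast this.ne'
    have hψ : ψ = ampVec A (maxEntVec e c) := by
      funext p
      obtain ⟨x, y⟩ := p
      show ψ (x, y) = ∑ x', A x x' * (((Real.sqrt k : ℂ))⁻¹ * ∑ i, e i x' * c i y)
      have step : ∀ x' : Fin N, A x x' * (((Real.sqrt k : ℂ))⁻¹ * ∑ i, e i x' * c i y)
          = ((Real.sqrt k : ℂ))⁻¹ * ∑ i, if x' = Fin.castLE hkN i then
              A x x' * c i y else 0 := by
        intro x'
        rw [Finset.mul_sum, Finset.mul_sum, Finset.mul_sum]
        refine Finset.sum_congr rfl fun i _ => ?_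
        simp only [he_def]
        by_cases hx : x' = Fin.castLE hkN i <;> simp [hx] <;> ring
      simp only [step]
      rw [← Finset.mul_sum, Finset.sum_comm]
      have inner_sum : ∀ i : Fin k, (∑ x' : Fin N, if x' = Fin.castLE hkN i then
          A x x' * c i y else 0) = (Real.sqrt k : ℂ) * ((∑ t, star (c i t) * M x t) * c i y) := by
        intro i
        rw [Finset.sum_ite_eq' Finset.univ (Fin.castLE hkN i)
          (fun x' => A x x' * c i y)]
        have hval : ((Fin.castLE hkN i : Fin N) : ℕ) < k := i.isLt
        simp only [Finset.mem_univ, if_true, hA, Matrix.of_apply, dif_pos hval]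
        have : (⟨((Fin.castLE hkN i : Fin N) : ℕ), hval⟩ : Fin k) = i := rfl
        rw [this]
        ring
      rw [Finset.sum_congr rfl fun i _ => inner_sum i]
      rw [← Finset.mul_sum, ← mul_assoc, inv_mul_cancel₀ hsqrt, one_mul]
      rw [Finset.sum_congr rfl fun i _ => rfl, hproj x y]
      rfl
    have hkey := (h e c he hc).mul_mul_conjTranspose_same (ampMat A)
    rw [← blockMap_amp Λ A (outer (maxEntVec e c)), ← outer_ampVec, ← hψ] at hkey
    exact hkey
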